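/- Let G be an AH-algebra and let g ∈ G. Then g = g⁺ − g⁻, g⁺g⁻ = g⁻g⁺ = 0, 0 ≤ |g| = g⁺ + g⁻, and |g|, g⁺, g⁻ ∈ CC(g). Moreover, g⁺ and g⁻ are characterized by these properties: if a,b ∈ G satisfy g = a − b, ab = 0, and 0 ≤ a + b, then a = g⁺ and b = g⁻. -/

import Mathlib

/-- An e-ring `(R,E)`: an associative ring `R` with unity together with a set `E ⊆ R`
of effects, satisfying the Foulis axioms.  `E⁺` is realized as the additive submonoid
closure of `E` (the set of all finite sums of effects). -/
structure ERing (R : Type*) [Ring R] where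
  E : Set R
  zero_mem : (0 : R) ∈ E
  one_mem : (1 : R) ∈ E
  compl_mem : ∀ e ∈ E, 1 - e ∈ E
  epos_i : ∀ a ∈ AddSubmonoid.closure E, -a ∈ AddSubmonoid.closure E → a = 0
  epos_ii : ∀ a ∈ AddSubmonoid.closure E, 1 - a ∈ AddSubmonoid.closure E → a ∈ E
  epos_iii : ∀ a ∈ AddSubmonoid.closure E, ∀ b ∈ AddSubmonoid.closure E,
    a * b = b * a → a * b ∈ AddSubmonoid.closure E
  epos_iv : ∀ a ∈ AddSubmonoid.closure E, ∀ b ∈ AddSubmonoid.closure E,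
    a * b * a ∈ AddSubmonoid.closure E
  epos_v : ∀ a ∈ AddSubmonoid.closure E, ∀ b ∈ AddSubmonoid.closure E,
    a * b * a = 0 → a * b = 0 ∧ b * a = 0
  epos_vi : ∀ a ∈ AddSubmonoid.closure E, ∀ b ∈ AddSubmonoid.closure E,
    (a - b) ^ 2 ∈ AddSubmonoid.closure E
  zero_ne_one : (0 : R) ≠ 1

namespace ERing

variable {R : Type*} [Ring R] (er : ERing R)

/-- `E⁺`, the set of all finite sums of effects; the positive cone of the directed group. -/
def Epos : Set R := (AddSubmonoid.closure er.E : Set R)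

/-- The directed group `G = E⁺ - E⁺` of the e-ring. -/
def G : Set R := {g | ∃ a ∈ er.Epos, ∃ b ∈ er.Epos, g = a - b}

/-- The partial order on the directed group: `g ≤ h` iff `h - g ∈ E⁺`. -/
def le (g h : R) : Prop := h - g ∈ er.Epos

/-- The set of projections `P = {p ∈ G : p = p²}`. -/
def P : Set R := {p | p ∈ er.G ∧ p = p ^ 2}

/-- The commutant in `G` of a subset `A ⊆ G`. -/
def commutant (A : Set R) : Set R := {g | g ∈ er.G ∧ ∀ a ∈ A, g * a = a * g}

/-- The bicommutant in `G` of a subset `A ⊆ G`. -/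
def CC (A : Set R) : Set R := er.commutant (er.commutant A)

/-- `s` is the supremum of `A` within the subset `S` (w.r.t. the e-ring order). -/
def IsSupIn (S A : Set R) (s : R) : Prop :=
  s ∈ S ∧ (∀ a ∈ A, er.le a s) ∧ ∀ b ∈ S, (∀ a ∈ A, er.le a b) → er.le s b

/-- `s` is the infimum of `A` within the subset `S` (w.r.t. the e-ring order). -/
def IsInfIn (S A : Set R) (s : R) : Prop :=
  s ∈ S ∧ (∀ a ∈ A, er.le s a) ∧ ∀ b ∈ S, (∀ a ∈ A, er.le b a) → er.le b s

/-- Quadratic annihilation property. -/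
def HasQA : Prop := ∀ g ∈ er.G, ∀ h ∈ er.G, g * h ^ 2 * g = 0 → g * h = 0 ∧ h * g = 0

/-- Commutative Vigier property: every ascending sequence of pairwise commuting elements
of `G` bounded above in `G` has a supremum in `G` which double commutes with the sequence. -/
def HasCV : Prop :=
  ∀ g : ℕ → R, (∀ n, g n ∈ er.G) → (∀ n, er.le (g n) (g (n + 1))) →
    (∀ m n, g m * g n = g n * g m) → (∃ b ∈ er.G, ∀ n, er.le (g n) b) →
    ∃ s, er.IsSupIn er.G (Set.range g) s ∧ s ∈ er.CC (Set.range g)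

/-- `G` is an abstract Hermitian (AH) algebra: there is a semitransparent effect `½`,
`G` has quadratic annihilation, and `G` has the commutative Vigier property. -/
def IsAH : Prop := (∃ h ∈ er.E, h + h = 1) ∧ er.HasQA ∧ er.HasCV

end ERing

namespace ERing

variable {R : Type*} [Ring R] (er : ERing R)

/-- `m` is the absolute value `|g| = (g²)^(1/2)` of `g`: `m ∈ G`, `0 ≤ m`, `m² = g²`. -/
def IsAbs (g m : R) : Prop := m ∈ er.G ∧ er.le 0 m ∧ m ^ 2 = g ^ 2

/-- `a` is the positive part `g⁺ = ½(|g| + g)` of `g`, i.e. `a ∈ G` and `a + a = |g| + g`. -/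
def IsPosPart (g a : R) : Prop := a ∈ er.G ∧ ∃ m, er.IsAbs g m ∧ a + a = m + g

/-- `b` is the negative part `g⁻ = ½(|g| − g)` of `g`, i.e. `b ∈ G` and `b + b = |g| − g`. -/
def IsNegPart (g b : R) : Prop := b ∈ er.G ∧ ∃ m, er.IsAbs g m ∧ b + b = m - g

/-- `p` is the carrier projection `g°` of `g`. -/
def IsCarrier (g p : R) : Prop := p ∈ er.P ∧ ∀ h ∈ er.G, (g * h = 0 ↔ p * h = 0)

end ERing

namespace ERing

variable {R : Type*} [Ring R] (er : ERing R)

lemma epos_add {x y : R} (hx : x ∈ er.Epos) (hy : y ∈ er.Epos) : x + y ∈ er.Epos :=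
  AddSubmonoid.add_mem _ hx hy

lemma epos_zero : (0 : R) ∈ er.Epos := AddSubmonoid.zero_mem _

lemma epos_of_E {x : R} (hx : x ∈ er.E) : x ∈ er.Epos := AddSubmonoid.subset_closure hx

lemma epos_one : (1 : R) ∈ er.Epos := er.epos_of_E er.one_mem

lemma epos_natCast (n : ℕ) : ((n : R)) ∈ er.Epos := by
  induction n with
  | zero => simpa using er.epos_zero
  | succ n ih => push_cast; exact er.epos_add ih er.epos_one

lemma epos_nsmul {x : R} (hx : x ∈ er.Epos) (n : ℕ) : n • x ∈ er.Epos :=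
  AddSubmonoid.nsmul_mem _ hx n

lemma epos_mul {x y : R} (hx : x ∈ er.Epos) (hy : y ∈ er.Epos) (h : x * y = y * x) :
    x * y ∈ er.Epos := er.epos_iii x hx y hy h

lemma G_of_epos {x : R} (hx : x ∈ er.Epos) : x ∈ er.G := ⟨x, hx, 0, er.epos_zero, by abel⟩

lemma G_zero : (0 : R) ∈ er.G := er.G_of_epos er.epos_zero

lemma G_one : (1 : R) ∈ er.G := er.G_of_epos er.epos_one

lemma G_add {x y : R} (hx : x ∈ er.G) (hy : y ∈ er.G) : x + y ∈ er.G := by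
  obtain ⟨p, hp, q, hq, rfl⟩ := hx
  obtain ⟨r, hr, t, ht, rfl⟩ := hy
  exact ⟨p + r, er.epos_add hp hr, q + t, er.epos_add hq ht, by abel⟩

lemma G_neg {x : R} (hx : x ∈ er.G) : -x ∈ er.G := by
  obtain ⟨p, hp, q, hq, rfl⟩ := hx
  exact ⟨q, hq, p, hp, by abel⟩

lemma G_sub {x y : R} (hx : x ∈ er.G) (hy : y ∈ er.G) : x - y ∈ er.G := by
  rw [sub_eq_add_neg]; exact er.G_add hx (er.G_neg hy)

lemma sq_epos {x : R} (hx : x ∈ er.G) : x ^ 2 ∈ er.Epos := by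
  obtain ⟨p, hp, q, hq, rfl⟩ := hx
  exact er.epos_vi p hp q hq

lemma le_refl (x : R) : er.le x x := by simpa [ERing.le] using er.epos_zero

lemma le_trans {x y z : R} (h1 : er.le x y) (h2 : er.le y z) : er.le x z := by
  have := er.epos_add h1 h2
  simpa [ERing.le, show y - x + (z - y) = z - x by abel] using this

lemma le_antisymm {x y : R} (h1 : er.le x y) (h2 : er.le y x) : x = y := by
  have h3 : y - x = 0 := er.epos_i _ h1 (by simpa [ERing.le, ERing.Epos, neg_sub] using h2)
  exact (sub_eq_zero.mp h3).symm

lemma zero_le_iff {x : R} : er.le 0 x ↔ x ∈ er.Epos := by simp [ERing.le]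

/-- Every element of `E⁺` is bounded above by a natural number. -/
lemma epos_bound {x : R} (hx : x ∈ er.Epos) : ∃ n : ℕ, ((n : R)) - x ∈ er.Epos := by
  induction hx using AddSubmonoid.closure_induction with
  | mem e he => exact ⟨1, by simpa using er.epos_of_E (er.compl_mem e he)⟩
  | zero => exact ⟨0, by simpa using er.epos_zero⟩
  | add x y _ _ hx hy =>
    obtain ⟨n, hn⟩ := hx; obtain ⟨m, hm⟩ := hy
    exact ⟨n + m, by push_cast; simpa [show ((n:R)+m) - (x+y) = ((n:R)-x)+((m:R)-y) by abel]
      using er.epos_add hn hm⟩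

end ERing
namespace ERing

variable {R : Type*} [Ring R] (er : ERing R)

lemma two_cancel {c : R} (hc : c + c = 1) {x y : R} (h : x + x = y + y) : x = y := by
  have key : ∀ z : R, (z + z) * c = z := fun z => by
    rw [add_mul, ← mul_add, hc, mul_one]
  rw [← key x, ← key y, h]

lemma half_central {c : R} (hc : c + c = 1) (r : R) : c * r = r * c := by
  refine two_cancel hc ?_
  rw [← add_mul, hc, one_mul, ← mul_add, hc, mul_one]

lemma half_double {c : R} (hc : c + c = 1) (z : R) : c * (z + z) = z := by
  rw [mul_add, ← add_mul, hc, one_mul]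

lemma epos_half {c : R} (hcE : c ∈ er.E) (hc : c + c = 1) {x : R} (hx : x ∈ er.Epos) :
    c * x ∈ er.Epos :=
  er.epos_mul (er.epos_of_E hcE) hx (half_central hc x)

lemma G_half {c : R} (hcE : c ∈ er.E) (hc : c + c = 1) {x : R} (hx : x ∈ er.G) :
    c * x ∈ er.G := by
  obtain ⟨p, hp, q, hq, rfl⟩ := hx
  exact ⟨c * p, er.epos_half hcE hc hp, c * q, er.epos_half hcE hc hq, by rw [mul_sub]⟩

lemma G_mul_comm {c : R} (hcE : c ∈ er.E) (hc : c + c = 1) {x y : R}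
    (hx : x ∈ er.G) (hy : y ∈ er.G) (hxy : x * y = y * x) : x * y ∈ er.G := by
  have key : x * y = c * ((x + y) ^ 2 - (x ^ 2 + y ^ 2)) := by
    have e1 : (x + y) ^ 2 - (x ^ 2 + y ^ 2) = x * y + x * y := by
      rw [sq, sq, sq, add_mul, mul_add, mul_add, ← hxy]; abel
    rw [e1, half_double hc]
  rw [key]
  exact er.G_half hcE hc (er.G_sub (er.G_of_epos (er.sq_epos (er.G_add hx hy)))
    (er.G_add (er.G_of_epos (er.sq_epos hx)) (er.G_of_epos (er.sq_epos hy))))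

lemma epos_pow {x : R} (hx : x ∈ er.Epos) (hcomm : ∀ r : R, x * r = r * x) (n : ℕ) :
    x ^ n ∈ er.Epos := by
  induction n with
  | zero => simpa using er.epos_one
  | succ n ih => rw [pow_succ]; exact er.epos_mul ih hx (hcomm _).symm

lemma G_nsmul {x : R} (hx : x ∈ er.G) (n : ℕ) : n • x ∈ er.G := by
  obtain ⟨p, hp, q, hq, rfl⟩ := hx
  exact ⟨n • p, er.epos_nsmul hp n, n • q, er.epos_nsmul hq n, by rw [smul_sub]⟩

end ERing
namespace ERing

variable {R : Type*} [Ring R] (er : ERing R)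

lemma exists_sqrt_le_one {c : R} (hcE : c ∈ er.E) (hc : c + c = 1) (hCV : er.HasCV)
    {h : R} (hhG : h ∈ er.G) (hh0 : h ∈ er.Epos) (hh1 : (1 : R) - h ∈ er.Epos) :
    ∃ s ∈ er.G, s ∈ er.Epos ∧ s ^ 2 = h ∧ ∀ k ∈ er.G, k * h = h * k → k * s = s * k := by
  let f : ℕ → R := fun n => n.rec 0 fun _ s => s + c * (h - s ^ 2)
  have hf0 : f 0 = 0 := rfl
  have hfs : ∀ n, f (n + 1) = f n + c * (h - f n ^ 2) := fun n => rfl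
  -- every element commuting with h commutes with every f n
  have hcomm : ∀ k : R, k * h = h * k → ∀ n, k * f n = f n * k := by
    intro k hk n
    induction n with
    | zero => rw [hf0, mul_zero, zero_mul]
    | succ n ih =>
      have hik : Commute k (f n) := ih
      have hck : Commute k c := (half_central hc k).symm
      have hhk : Commute k h := hk
      rw [hfs]
      exact hik.add_right (hck.mul_right (hhk.sub_right (hik.pow_right 2)))
  have hfh : ∀ n, h * f n = f n * h := fun n => hcomm h rfl n
  have hff : ∀ m n, f m * f n = f n * f m := fun m n => hcomm (f m) (hfh m).symm n
  have hfG : ∀ n, f n ∈ er.G := by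
    intro n
    induction n with
    | zero => rw [hf0]; exact er.G_zero
    | succ n ih =>
      rw [hfs]
      exact er.G_add ih (er.G_half hcE hc (er.G_sub hhG (er.G_of_epos (er.sq_epos ih))))
  have hd : ∀ n, f (n + 1) - f n = c * (h - f n ^ 2) := fun n => by rw [hfs]; abel
  -- positivity induction: f n ≤ 1 and f n ≤ f (n+1)
  have key : ∀ n, (1 - f n ∈ er.Epos) ∧ (f (n + 1) - f n ∈ er.Epos) := by
    intro n
    induction n with
    | zero =>
      constructor
      · rw [hf0, sub_zero]; exact er.epos_one
      · rw [hd 0, hf0]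
        have e0 : h - (0 : R) ^ 2 = h := by simp
        rw [e0]
        exact er.epos_half hcE hc hh0
    | succ n ih =>
      have ht1 : 1 - f (n + 1) ∈ er.Epos := by
        have e1 : (1 - f n) ^ 2 + (1 - h) = ((1 - f n) + (1 - f n)) + (f n ^ 2 - h) := by
          noncomm_ring
        have key1 : 1 - f (n + 1) = c * ((1 - f n) ^ 2 + (1 - h)) := by
          rw [e1, mul_add, half_double hc, hfs]
          rw [mul_sub]
          noncomm_ring
        rw [key1]
        exact er.epos_half hcE hc
          (er.epos_add (er.sq_epos (er.G_sub er.G_one (hfG n))) hh1)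
      refine ⟨ht1, ?_⟩
      have hdd : (f (n + 1) - f n) + (f (n + 1) - f n) = h - f n ^ 2 := by
        rw [hd n, ← add_mul, hc, one_mul]
      have e2 : (1 - f n) ^ 2 - (1 - f (n + 1)) ^ 2 = h - f (n + 1) ^ 2 := by
        calc (1 - f n) ^ 2 - (1 - f (n + 1)) ^ 2
            = ((f (n + 1) - f n) + (f (n + 1) - f n)) + (f n ^ 2 - f (n + 1) ^ 2) := by
              noncomm_ring
          _ = (h - f n ^ 2) + (f n ^ 2 - f (n + 1) ^ 2) := by rw [hdd]
          _ = h - f (n + 1) ^ 2 := by abel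
      have hcm : f n * f (n + 1) = f (n + 1) * f n := hff n (n + 1)
      have e3 : (1 - f n) ^ 2 - (1 - f (n + 1)) ^ 2
          = ((1 - f (n + 1)) + (1 - f n)) * (f (n + 1) - f n) := by
        calc (1 - f n) ^ 2 - (1 - f (n + 1)) ^ 2
            = ((1 - f (n + 1)) + (1 - f n)) * (f (n + 1) - f n)
              + (f n * f (n + 1) - f (n + 1) * f n) := by noncomm_ring
          _ = _ := by rw [hcm]; abel
      have hcomm2 : ((1 - f (n + 1)) + (1 - f n)) * (f (n + 1) - f n)
          = (f (n + 1) - f n) * ((1 - f (n + 1)) + (1 - f n)) := by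
        have cA : Commute (1 - f (n + 1)) (f (n + 1)) :=
          (Commute.one_left _).sub_left (Commute.refl _)
        have cB : Commute (1 - f (n + 1)) (f n) :=
          (Commute.one_left _).sub_left (hff (n + 1) n)
        have cC : Commute (1 - f n) (f (n + 1)) :=
          (Commute.one_left _).sub_left (hff n (n + 1))
        have cD : Commute (1 - f n) (f n) :=
          (Commute.one_left _).sub_left (Commute.refl _)
        exact (cA.sub_right cB).add_left (cC.sub_right cD)
      have goal2 : f (n + 1 + 1) - f (n + 1) ∈ er.Epos := by
        rw [hd (n + 1), ← e2, e3]
        exact er.epos_half hcE hc (er.epos_mul (er.epos_add ht1 ih.1) ih.2 hcomm2)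
      exact goal2
  have hfE : ∀ n, f n ∈ er.Epos := by
    intro n; induction n with
    | zero => rw [hf0]; exact er.epos_zero
    | succ n ih =>
      have h1 := er.epos_add ih (key n).2
      have e4 : f n + (f (n + 1) - f n) = f (n + 1) := by abel
      rwa [e4] at h1
  obtain ⟨s, ⟨hsG, hub, hlub⟩, hsCC⟩ :=
    hCV f hfG (fun n => (key n).2) hff ⟨1, er.G_one, fun n => (key n).1⟩
  have hsE : s ∈ er.Epos := by
    have h1 : s - f 0 ∈ er.Epos := hub (f 0) ⟨0, rfl⟩
    rwa [hf0, sub_zero] at h1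
  have hs1 : (1 : R) - s ∈ er.Epos :=
    hlub 1 er.G_one (by rintro a ⟨n, rfl⟩; exact (key n).1)
  have hsk : ∀ k ∈ er.G, k * h = h * k → k * s = s * k := by
    intro k hkG hk
    have hkc : k ∈ er.commutant (Set.range f) :=
      ⟨hkG, by rintro a ⟨n, rfl⟩; exact hcomm k hk n⟩
    exact (hsCC.2 k hkc).symm
  have hsf : ∀ n, f n * s = s * f n := fun n => hsk (f n) (hfG n) (hfh n).symm
  have hpw : ∀ n, (s + f n) * (s - f n) = s ^ 2 - f n ^ 2 := by
    intro n
    calc (s + f n) * (s - f n) = s ^ 2 - f n ^ 2 + (f n * s - s * f n) := by noncomm_ring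
      _ = s ^ 2 - f n ^ 2 := by rw [hsf n]; abel
  -- s^2 ≤ h
  have hsqle : c * (h - s ^ 2) ∈ er.Epos := by
    have hs'G : s + c * (h - s ^ 2) ∈ er.G :=
      er.G_add hsG (er.G_half hcE hc (er.G_sub hhG (er.G_of_epos (er.sq_epos hsG))))
    have hsucc : ∀ n, (s + c * (h - s ^ 2)) - f (n + 1) ∈ er.Epos := by
      intro n
      have hubn : s - f n ∈ er.Epos := hub (f n) ⟨n, rfl⟩
      have e6 : (s + c * (h - s ^ 2)) - f (n + 1)
          = (c * ((1 - s) + (1 - f n))) * (s - f n) := by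
        have e5 : ((1 : R) - s) + (1 - f n) = (1 + 1) - (s + f n) := by abel
        rw [e5, mul_sub c (1+1) (s + f n), half_double hc 1, sub_mul, one_mul, mul_assoc, hpw n, hfs n]
        noncomm_ring
      have hfac : (c * ((1 - s) + (1 - f n))) * (s - f n)
          = (s - f n) * (c * ((1 - s) + (1 - f n))) := by
        have cS : Commute s (f n) := (hsf n).symm
        have c1 : Commute ((1 : R) - s) (s - f n) :=
          (((Commute.one_left s).sub_left (Commute.refl s)).sub_right
            ((Commute.one_left (f n)).sub_left cS))
        have c2 : Commute ((1 : R) - f n) (s - f n) :=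
          (((Commute.one_left s).sub_left cS.symm).sub_right
            ((Commute.one_left (f n)).sub_left (Commute.refl _)))
        have ccc : Commute c (s - f n) := half_central hc (s - f n)
        exact ccc.mul_left (c1.add_left c2)
      rw [e6]
      exact er.epos_mul (er.epos_half hcE hc (er.epos_add hs1 (key n).1)) hubn hfac
    have hbound : ∀ a ∈ Set.range f, er.le a (s + c * (h - s ^ 2)) := by
      rintro a ⟨n, rfl⟩
      exact er.le_trans ((key n).2 : er.le (f n) (f (n + 1))) (hsucc n)
    have h1 : (s + c * (h - s ^ 2)) - s ∈ er.Epos := hlub _ hs'G hbound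
    rwa [show (s + c * (h - s ^ 2)) - s = c * (h - s ^ 2) by abel] at h1
  -- archimedean argument : c * (h - s^2) = 0
  have hde : ∀ n, (f (n + 1) - f n) - c * (h - s ^ 2) ∈ er.Epos := by
    intro n
    have e8 : (f (n + 1) - f n) - c * (h - s ^ 2) = c * ((s + f n) * (s - f n)) := by
      rw [hd n, hpw n, ← mul_sub]
      congr 1
      abel
    rw [e8]
    have hmm : (s + f n) * (s - f n) = (s - f n) * (s + f n) := by
      have h2 : (s - f n) * (s + f n) = s ^ 2 - f n ^ 2 + (s * f n - f n * s) := by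
        noncomm_ring
      rw [hpw n, h2, hsf n]
      abel
    exact er.epos_half hcE hc
      (er.epos_mul (er.epos_add hsE (hfE n)) (hub (f n) ⟨n, rfl⟩) hmm)
  have hne : ∀ n, f n - n • (c * (h - s ^ 2)) ∈ er.Epos := by
    intro n; induction n with
    | zero => rw [hf0, zero_nsmul, sub_zero]; exact er.epos_zero
    | succ n ih =>
      have h1 := er.epos_add ih (hde n)
      have e9 : (f n - n • (c * (h - s ^ 2))) + ((f (n + 1) - f n) - c * (h - s ^ 2))
          = f (n + 1) - (n + 1) • (c * (h - s ^ 2)) := by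
        rw [succ_nsmul]; abel
      rwa [e9] at h1
  have heE : c * (h - s ^ 2) ∈ er.Epos := hsqle
  have hmono : ∀ n : ℕ, er.le (n • (c * (h - s ^ 2))) ((n + 1) • (c * (h - s ^ 2))) := by
    intro n
    show (n + 1) • (c * (h - s ^ 2)) - n • (c * (h - s ^ 2)) ∈ er.Epos
    rw [succ_nsmul]
    simpa using heE
  have hcomm3 : ∀ m n : ℕ,
      (m • (c * (h - s ^ 2))) * (n • (c * (h - s ^ 2)))
        = (n • (c * (h - s ^ 2))) * (m • (c * (h - s ^ 2))) := by
    have base : ∀ i j : ℕ, (i • (c * (h - s ^ 2))) * (j • (c * (h - s ^ 2)))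
        = (i * j) • ((c * (h - s ^ 2)) * (c * (h - s ^ 2))) := by
      intro i j
      rw [smul_mul_assoc, mul_smul_comm, smul_smul]
    intro m n
    rw [base, base, Nat.mul_comm]
  have hbound2 : ∃ b ∈ er.G, ∀ n : ℕ, er.le (n • (c * (h - s ^ 2))) b := by
    refine ⟨1, er.G_one, fun n => ?_⟩
    show (1 : R) - n • (c * (h - s ^ 2)) ∈ er.Epos
    have h1 := er.epos_add (key n).1 (hne n)
    have e10 : (1 - f n) + (f n - n • (c * (h - s ^ 2)))
        = 1 - n • (c * (h - s ^ 2)) := by abel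
    rwa [e10] at h1
  obtain ⟨v, ⟨hvG, hvub, hvlub⟩, -⟩ :=
    hCV (fun n => n • (c * (h - s ^ 2)))
      (fun n => er.G_of_epos (er.epos_nsmul heE n)) hmono hcomm3 hbound2
  have hvee : ∀ a ∈ Set.range (fun n : ℕ => n • (c * (h - s ^ 2))),
      er.le a (v - c * (h - s ^ 2)) := by
    rintro a ⟨n, rfl⟩
    show (v - c * (h - s ^ 2)) - n • (c * (h - s ^ 2)) ∈ er.Epos
    have h1 : v - (n + 1) • (c * (h - s ^ 2)) ∈ er.Epos :=
      hvub ((n + 1) • (c * (h - s ^ 2))) ⟨n + 1, rfl⟩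
    have e11 : v - (n + 1) • (c * (h - s ^ 2))
        = (v - c * (h - s ^ 2)) - n • (c * (h - s ^ 2)) := by
      rw [succ_nsmul]; abel
    rwa [e11] at h1
  have hvv : (v - c * (h - s ^ 2)) - v ∈ er.Epos :=
    hvlub (v - c * (h - s ^ 2)) (er.G_sub hvG (er.G_of_epos heE)) hvee
  have hneg : -(c * (h - s ^ 2)) ∈ er.Epos := by
    rwa [show (v - c * (h - s ^ 2)) - v = -(c * (h - s ^ 2)) by abel] at hvv
  have he0 : c * (h - s ^ 2) = 0 := er.epos_i _ heE hneg
  have hs2 : s ^ 2 = h := by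
    have e12 : c * (h - s ^ 2) + c * (h - s ^ 2) = h - s ^ 2 := by
      rw [← add_mul, hc, one_mul]
    have h1 : h - s ^ 2 = 0 := by rw [← e12, he0, add_zero]
    exact (sub_eq_zero.mp h1).symm
  exact ⟨s, hsG, hsE, hs2, hsk⟩

end ERing
namespace ERing

variable {R : Type*} [Ring R] (er : ERing R)

lemma exists_sqrt {c : R} (hcE : c ∈ er.E) (hc : c + c = 1) (hCV : er.HasCV)
    {h : R} (hhG : h ∈ er.G) (hh0 : h ∈ er.Epos) :
    ∃ s ∈ er.G, s ∈ er.Epos ∧ s ^ 2 = h ∧ ∀ k ∈ er.G, k * h = h * k → k * s = s * k := by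
  obtain ⟨N, hN⟩ := er.epos_bound hh0
  have hcC : ∀ r : R, c * r = r * c := half_central hc
  have h4 : (4 : R) ^ N - h ∈ er.Epos := by
    have hle : N ≤ 4 ^ N := le_of_lt (Nat.lt_pow_self (by norm_num : 1 < 4) : N < 4 ^ N)
    have h1 : ((4 ^ N - N : ℕ) : R) ∈ er.Epos := er.epos_natCast _
    have h2 := er.epos_add h1 hN
    have e1 : (((4 ^ N - N : ℕ) : R)) + (((N : ℕ) : R) - h) = (4 : R) ^ N - h := by
      push_cast [hle]
      abel
    rwa [e1] at h2
  have hcpE : c ^ (2 * N) ∈ er.Epos := er.epos_pow (er.epos_of_E hcE) hcC _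
  have hcpC : ∀ r : R, c ^ (2 * N) * r = r * c ^ (2 * N) := by
    intro r
    have : Commute r c := (hcC r).symm
    exact (this.pow_right (2 * N)).symm
  have h2c : (2 : R) * c = 1 := by rw [two_mul, hc]
  have hC2 : Commute (2 : R) c := (hcC 2).symm
  have hcan : (2 : R) ^ (2 * N) * c ^ (2 * N) = 1 := by
    rw [← hC2.mul_pow, h2c, one_pow]
  have h24 : ((2 : R)) ^ (2 * N) = (4 : R) ^ N := by
    rw [pow_mul]; norm_num
  have hh'E : c ^ (2 * N) * h ∈ er.Epos := er.epos_mul hcpE hh0 (hcpC h)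
  have hh'G : c ^ (2 * N) * h ∈ er.G := er.G_of_epos hh'E
  have hh'1 : (1 : R) - c ^ (2 * N) * h ∈ er.Epos := by
    have e2 : (1 : R) - c ^ (2 * N) * h = c ^ (2 * N) * ((4 : R) ^ N - h) := by
      rw [mul_sub]
      congr 1
      rw [← h24, ← hcan]
      exact (hcpC _).symm
    rw [e2]
    exact er.epos_mul hcpE h4 (hcpC _)
  obtain ⟨t, htG, htE, ht2, htk⟩ := er.exists_sqrt_le_one hcE hc hCV hh'G hh'E hh'1
  refine ⟨(2 ^ N : ℕ) • t, er.G_of_epos (er.epos_nsmul htE _), er.epos_nsmul htE _, ?_, ?_⟩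
  · have e3 : ((2 ^ N : ℕ) • t) ^ 2 = (2 ^ N * 2 ^ N : ℕ) • t ^ 2 := by
      rw [pow_two, smul_mul_assoc, mul_smul_comm, smul_smul, ← pow_two t]
    rw [e3, ht2, nsmul_eq_mul]
    push_cast
    have e4 : (2 : R) ^ N * (2 : R) ^ N = (2 : R) ^ (2 * N) := by
      rw [← pow_add, two_mul]
    rw [e4, ← mul_assoc, hcan, one_mul]
  · intro k hkG hk
    have hkh' : k * (c ^ (2 * N) * h) = (c ^ (2 * N) * h) * k := by
      calc k * (c ^ (2 * N) * h) = (c ^ (2 * N)) * (k * h) := by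
            rw [← mul_assoc, ← hcpC k, mul_assoc]
        _ = (c ^ (2 * N) * h) * k := by rw [hk, mul_assoc]
    have hkt := htk k hkG hkh'
    rw [mul_smul_comm, smul_mul_assoc, hkt]

/-- uniqueness of commuting positive square roots -/
lemma sqrt_unique (hQA : er.HasQA) {m s : R} (hmG : m ∈ er.G) (hmE : m ∈ er.Epos)
    (hsG : s ∈ er.G) (hsE : s ∈ er.Epos) (h2 : m ^ 2 = s ^ 2) (hms : m * s = s * m) :
    m = s := by
  have huG : m - s ∈ er.G := er.G_sub hmG hsG
  have hu2E : (m - s) ^ 2 ∈ er.Epos := er.sq_epos huG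
  have h1 : (m + s) * (m - s) = 0 := by
    have e1 : (m + s) * (m - s) = m ^ 2 - s ^ 2 + (s * m - m * s) := by noncomm_ring
    rw [e1, hms, h2]
    abel
  have humu : m * (m - s) ^ 2 + s * (m - s) ^ 2 = 0 := by
    have e2 : m * (m - s) ^ 2 + s * (m - s) ^ 2 = ((m + s) * (m - s)) * (m - s) := by
      noncomm_ring
    rw [e2, h1, zero_mul]
  have cmu : Commute m (m - s) := (Commute.refl m).sub_right hms
  have csm : Commute s m := hms.symm
  have csu : Commute s (m - s) := csm.sub_right (Commute.refl s)
  have hmuE : m * (m - s) ^ 2 ∈ er.Epos :=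
    er.epos_mul hmE hu2E (cmu.pow_right 2)
  have hsuE : s * (m - s) ^ 2 ∈ er.Epos :=
    er.epos_mul hsE hu2E (csu.pow_right 2)
  have hmu0 : m * (m - s) ^ 2 = 0 := by
    refine er.epos_i _ hmuE ?_
    have : -(m * (m - s) ^ 2) = s * (m - s) ^ 2 := by
      rw [neg_eq_iff_add_eq_zero]
      exact humu
    rwa [this]
  have hsu0 : s * (m - s) ^ 2 = 0 := by
    have := humu
    rwa [hmu0, zero_add] at this
  have hu3 : (m - s) ^ 3 = 0 := by
    have e3 : (m - s) ^ 3 = m * (m - s) ^ 2 - s * (m - s) ^ 2 := by noncomm_ring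
    rw [e3, hmu0, hsu0, sub_zero]
  have hu2 : (m - s) ^ 2 = 0 := by
    have h4 : (m - s) ^ 2 * 1 ^ 2 * ((m - s) ^ 2) = 0 := by
      have e4 : (m - s) ^ 2 * 1 ^ 2 * ((m - s) ^ 2) = (m - s) * ((m - s) ^ 3) := by
        noncomm_ring
      rw [e4, hu3, mul_zero]
    have := (hQA ((m - s) ^ 2) (er.G_of_epos hu2E) 1 er.G_one h4).1
    rwa [mul_one] at this
  have hu0 : m - s = 0 := by
    have h5 : (m - s) * 1 ^ 2 * (m - s) = 0 := by
      have e5 : (m - s) * 1 ^ 2 * (m - s) = (m - s) ^ 2 := by noncomm_ring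
      rw [e5, hu2]
    have := (hQA (m - s) huG 1 er.G_one h5).1
    rwa [mul_one] at this
  exact sub_eq_zero.mp hu0

end ERing
/-- In an AH-algebra, with `m = |g|`, `a = g⁺` and `b = g⁻`:
`g = g⁺ − g⁻`, `g⁺g⁻ = g⁻g⁺ = 0`, `0 ≤ |g| = g⁺ + g⁻`, and `|g|, g⁺, g⁻ ∈ CC(g)`;
moreover `g⁺, g⁻` are characterized by: `g = a' − b'`, `a'b' = 0`, `0 ≤ a' + b'`
imply `a' = g⁺` and `b' = g⁻`. -/
theorem stmt8 {R : Type*} [Ring R] (er : ERing R) (hAH : er.IsAH)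
    (g m a b : R) (hg : g ∈ er.G) (hm : er.IsAbs g m)
    (ha : a ∈ er.G) (hb : b ∈ er.G)
    (ha2 : a + a = m + g) (hb2 : b + b = m - g) :
    g = a - b ∧ a * b = 0 ∧ b * a = 0 ∧ er.le 0 m ∧ m = a + b ∧
    m ∈ er.CC {g} ∧ a ∈ er.CC {g} ∧ b ∈ er.CC {g} ∧
    ∀ a' b', a' ∈ er.G → b' ∈ er.G → g = a' - b' → a' * b' = 0 →
      er.le 0 (a' + b') → a' = a ∧ b' = b := by
  obtain ⟨⟨c, hcE, hc⟩, hQA, hCV⟩ := hAH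
  obtain ⟨hmG, hm0, hm2⟩ := hm
  have hmE : m ∈ er.Epos := by
    have h0 : m - 0 ∈ er.Epos := hm0
    rwa [sub_zero] at h0
  have hg2E : g ^ 2 ∈ er.Epos := er.sq_epos hg
  obtain ⟨s, hsG, hsE, hs2, hsk⟩ := er.exists_sqrt hcE hc hCV (er.G_of_epos hg2E) hg2E
  have hms : m * s = s * m :=
    hsk m hmG (by rw [← hm2, pow_two, mul_assoc])
  have hmeq : m = s := er.sqrt_unique hQA hmG hmE hsG hsE (by rw [hm2, hs2]) hms
  have hmC : ∀ k ∈ er.G, k * g = g * k → k * m = m * k := by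
    intro k hkG hkg
    rw [hmeq]
    exact hsk k hkG (by rw [pow_two, ← mul_assoc, hkg, mul_assoc, hkg, ← mul_assoc])
  have hmg : m * g = g * m := (hmC g hg rfl).symm
  have tc : ∀ x y : R, x + x = y + y → x = y := fun x y h => ERing.two_cancel hc h
  have hab : a * b = 0 := by
    have hab4 : (a + a) * (b + b) = 0 := by
      rw [ha2, hb2]
      have e1 : (m + g) * (m - g) = m ^ 2 - g ^ 2 + (g * m - m * g) := by noncomm_ring
      rw [e1, hm2, hmg]
      abel
    have e2 : (a + a) * (b + b) = (a * b + a * b) + (a * b + a * b) := by noncomm_ring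
    have h3 : a * b + a * b = 0 := tc _ 0 (by rw [← e2, hab4]; abel)
    exact tc _ 0 (by simpa using h3)
  have hba : b * a = 0 := by
    have hba4 : (b + b) * (a + a) = 0 := by
      rw [ha2, hb2]
      have e1 : (m - g) * (m + g) = m ^ 2 - g ^ 2 + (m * g - g * m) := by noncomm_ring
      rw [e1, hm2, hmg]
      abel
    have e2 : (b + b) * (a + a) = (b * a + b * a) + (b * a + b * a) := by noncomm_ring
    have h3 : b * a + b * a = 0 := tc _ 0 (by rw [← e2, hba4]; abel)
    exact tc _ 0 (by simpa using h3)
  have hgab : g = a - b := by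
    refine (tc (a - b) g ?_).symm
    rw [show (a - b) + (a - b) = (a + a) - (b + b) by abel, ha2, hb2]
    abel
  have hmab : m = a + b := by
    refine (tc (a + b) m ?_).symm
    rw [show (a + b) + (a + b) = (a + a) + (b + b) by abel, ha2, hb2]
    abel
  have hmCC : m ∈ er.CC {g} := by
    refine ⟨hmG, ?_⟩
    rintro k ⟨hkG, hkc⟩
    exact (hmC k hkG (hkc g rfl)).symm
  have haCC : a ∈ er.CC {g} := by
    refine ⟨ha, ?_⟩
    rintro k ⟨hkG, hkc⟩
    have hkg := hkc g rfl
    have hkm := hmC k hkG hkg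
    refine tc (a * k) (k * a) ?_
    calc a * k + a * k = (a + a) * k := by noncomm_ring
      _ = (m + g) * k := by rw [ha2]
      _ = k * (m + g) := by rw [add_mul, mul_add, hkm, hkg]
      _ = k * (a + a) := by rw [← ha2]
      _ = k * a + k * a := by noncomm_ring
  have hbCC : b ∈ er.CC {g} := by
    refine ⟨hb, ?_⟩
    rintro k ⟨hkG, hkc⟩
    have hkg := hkc g rfl
    have hkm := hmC k hkG hkg
    refine tc (b * k) (k * b) ?_
    calc b * k + b * k = (b + b) * k := by noncomm_ring
      _ = (m - g) * k := by rw [hb2]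
      _ = k * (m - g) := by rw [sub_mul, mul_sub, hkm, hkg]
      _ = k * (b + b) := by rw [← hb2]
      _ = k * b + k * b := by noncomm_ring
  refine ⟨hgab, hab, hba, hm0, hmab, hmCC, haCC, hbCC, ?_⟩
  intro a' b' ha'G hb'G hgab' hab' hm'0
  have hba' : b' * a' = 0 := by
    have h6 : a' * b' ^ 2 * a' = 0 := by
      rw [pow_two, ← mul_assoc, hab', zero_mul, zero_mul]
    exact (hQA a' ha'G b' hb'G h6).2
  have hm'E : a' + b' ∈ er.Epos := by
    have h7 : (a' + b') - 0 ∈ er.Epos := hm'0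
    rwa [sub_zero] at h7
  have hm'G : a' + b' ∈ er.G := er.G_add ha'G hb'G
  have hm'2 : (a' + b') ^ 2 = g ^ 2 := by
    have e7 : (a' + b') ^ 2
        = (a' - b') ^ 2 + ((a' * b' + b' * a') + (a' * b' + b' * a')) := by noncomm_ring
    rw [e7, hab', hba', ← hgab']
    simp
  have hm's : (a' + b') * s = s * (a' + b') :=
    hsk (a' + b') hm'G (by rw [← hm'2, pow_two, mul_assoc])
  have hm'eq : a' + b' = s :=
    er.sqrt_unique hQA hm'G hm'E hsG hsE (by rw [hm'2, hs2]) hm's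
  have hm'm : a' + b' = m := by rw [hm'eq, hmeq]
  constructor
  · refine tc a' a ?_
    calc a' + a' = (a' + b') + (a' - b') := by abel
      _ = m + g := by rw [hm'm, ← hgab']
      _ = a + a := ha2.symm
  · refine tc b' b ?_
    calc b' + b' = (a' + b') - (a' - b') := by abel
      _ = m - g := by rw [hm'm, ← hgab']
      _ = b + b := hb2.symm
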